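/- Let A be a commutative ring, M ∈ Symₙ(A), a ∈ A, v ∈ Aⁿ and b ∈ A. Suppose there exist sums of squares s₁, r ∈ ΣA² with s₁·a = b² + r, and suppose a·v ∈ Σ(M). Then b²·v ∈ Σ(M). -/

import Mathlib

open Matrix

/-- A symmetric matrix is a *sum of squares* if it equals `Qᵀ * Q` for some matrix `Q`. -/
def Matrix.IsSumOfSquares {A : Type*} [CommRing A] {n : ℕ}
    (M : Matrix (Fin n) (Fin n) A) : Prop :=
  ∃ (m : ℕ) (Q : Matrix (Fin m) (Fin n) A), M = Qᵀ * Q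

/-- `Σ(M)`: the set of vectors `v` with `s • M = v vᵀ + N` for some sum of squares
`s ∈ ΣA²` and some sum-of-squares matrix `N`. -/
def SigmaSet {A : Type*} [CommRing A] {n : ℕ} (M : Matrix (Fin n) (Fin n) A) :
    Set (Fin n → A) :=
  {v | ∃ s : A, IsSumSq s ∧ ∃ N : Matrix (Fin n) (Fin n) A,
    N.IsSumOfSquares ∧ s • M = vecMulVec v v + N}

section Aux

variable {A : Type*} [CommRing A] {n : ℕ}

lemma isSumSq_sq_mul (a : A) {y : A} (hy : IsSumSq y) : IsSumSq (a * a * y) := by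
  induction hy with
  | zero => simpa using IsSumSq.zero
  | sq_add c _ ih =>
    rw [mul_add]
    refine IsSumSq.add ?_ ih
    have : a * a * (c * c) = (a * c) * (a * c) := by ring
    rw [this]
    simpa using IsSumSq.sq_add (a * c) IsSumSq.zero

lemma isSumSq_mul {x y : A} (hx : IsSumSq x) (hy : IsSumSq y) : IsSumSq (x * y) := by
  induction hx with
  | zero => simpa using IsSumSq.zero
  | sq_add a _ ih =>
    rw [add_mul]
    exact IsSumSq.add (isSumSq_sq_mul a hy) ih

lemma sos_zero : (0 : Matrix (Fin n) (Fin n) A).IsSumOfSquares :=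
  ⟨0, 0, by ext i j; simp [Matrix.mul_apply]⟩

lemma sos_add {N₁ N₂ : Matrix (Fin n) (Fin n) A} (h₁ : N₁.IsSumOfSquares)
    (h₂ : N₂.IsSumOfSquares) : (N₁ + N₂).IsSumOfSquares := by
  obtain ⟨m₁, Q₁, rfl⟩ := h₁
  obtain ⟨m₂, Q₂, rfl⟩ := h₂
  refine ⟨m₁ + m₂, (Matrix.fromRows Q₁ Q₂).submatrix finSumFinEquiv.symm id, ?_⟩
  ext i j
  simp only [Matrix.add_apply, Matrix.mul_apply, Matrix.transpose_apply,
    Matrix.submatrix_apply, id]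
  rw [← Equiv.sum_comp finSumFinEquiv
    (fun k => (Matrix.fromRows Q₁ Q₂) (finSumFinEquiv.symm k) i *
      (Matrix.fromRows Q₁ Q₂) (finSumFinEquiv.symm k) j)]
  simp [Fintype.sum_sum_type, Matrix.fromRows]
  rfl

lemma sos_sq_smul (c : A) {N : Matrix (Fin n) (Fin n) A} (h : N.IsSumOfSquares) :
    ((c * c) • N).IsSumOfSquares := by
  obtain ⟨m, Q, rfl⟩ := h
  refine ⟨m, c • Q, ?_⟩
  ext i j
  simp [Matrix.mul_apply, Finset.mul_sum]
  congr 1; ext k; ring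

lemma sos_smul {c : A} (hc : IsSumSq c) {N : Matrix (Fin n) (Fin n) A}
    (h : N.IsSumOfSquares) : (c • N).IsSumOfSquares := by
  induction hc with
  | zero => simpa using sos_zero
  | sq_add a _ ih =>
    rw [add_smul]
    exact sos_add (sos_sq_smul a h) ih

lemma sos_vecMulVec (v : Fin n → A) : (vecMulVec v v).IsSumOfSquares := by
  refine ⟨1, Matrix.of fun _ j => v j, ?_⟩
  ext i j
  simp [Matrix.mul_apply, vecMulVec_apply]

end Aux

theorem sq_smul_mem_sigmaSet {A : Type*} [CommRing A] {n : ℕ}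
    (M : Matrix (Fin n) (Fin n) A) (a : A) (v : Fin n → A) (b : A)
    (s₁ r : A) (hs₁ : IsSumSq s₁) (hr : IsSumSq r) (h : s₁ * a = b ^ 2 + r)
    (hav : a • v ∈ SigmaSet M) :
    b ^ 2 • v ∈ SigmaSet M := by
  obtain ⟨s, hs, N, hN, hEq⟩ := hav
  refine ⟨s₁ * s₁ * s, isSumSq_mul (isSumSq_mul hs₁ hs₁) hs,
    (2 * (b ^ 2) * r + r * r) • vecMulVec v v + (s₁ * s₁) • N, ?_, ?_⟩
  · refine sos_add (sos_smul ?_ (sos_vecMulVec v)) (sos_sq_smul s₁ hN)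
    refine IsSumSq.add ?_ (isSumSq_mul hr hr)
    have : 2 * b ^ 2 * r = b ^ 2 * r + b ^ 2 * r := by ring
    rw [this]
    have hb : IsSumSq (b ^ 2) := by
      have := IsSumSq.sq_add b IsSumSq.zero
      simpa [sq] using this
    exact IsSumSq.add (isSumSq_mul hb hr) (isSumSq_mul hb hr)
  · have h1 : (s₁ * s₁ * s) • M = (s₁ * s₁) • (s • M) := by
      rw [smul_smul, mul_assoc]
    rw [h1, hEq]
    have h2 : vecMulVec (a • v) (a • v) = (a * a) • vecMulVec v v := by
      ext i j; simp [vecMulVec_apply]; ring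
    have h3 : vecMulVec (b ^ 2 • v) (b ^ 2 • v) = (b ^ 2 * b ^ 2) • vecMulVec v v := by
      ext i j; simp [vecMulVec_apply]; ring
    rw [h2, h3, smul_add, smul_smul]
    have h4 : s₁ * s₁ * (a * a) = b ^ 2 * b ^ 2 + (2 * b ^ 2 * r + r * r) := by
      linear_combination (s₁ * a + b ^ 2 + r) * h
    rw [h4, add_smul, add_smul]
    abel
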